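/- arXiv:2202.08087 — 3 statements merged into one kernel-verified Lean document; each statement's English description precedes it below -/
import Mathlib

section
/- Let d ≥ K ≥ 2, n ≥ 1, λ_W > 0, λ_H > 0, and set c := K√(nλ_H λ_W). Consider f(W,H) := (1/(2Kn))‖WH − Y‖_F² + (λ_W/2)‖W‖_F² + (λ_H/2)‖H‖_F² over W ∈ ℝ^{K×d} and H ∈ ℝ^{d×Kn}. If c ≤ 1, then any global minimizer (W*, H*) of f satisfies: (i) h*_{k,1} = … = h*_{k,n} =: h*_k for every class k ∈ [K]; (ii) ‖h*_1‖₂² = … = ‖h*_K‖₂² = ρ := (1−c)√(λ_W/(nλ_H)); (iii) the Gram matrix [h*_1,…,h*_K]ᵀ[h*_1,…,h*_K] equals ρ·I_K; (iv) w*_k = √(nλ_H/λ_W)·h*_k for every k ∈ [K]. If c > 1, then f attains its global minimum at (W*, H*) = (0, 0). -/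
open Matrix Finset

noncomputable section

/-- Squared Frobenius norm of a real matrix. -/
def frobSq {m n : Type*} [Fintype m] [Fintype n] (A : Matrix m n ℝ) : ℝ :=
  ∑ i, ∑ j, (A i j) ^ 2

private lemma sum_sq_nonneg {ι : Type*} [Fintype ι] (f : ι → ℝ) : 0 ≤ ∑ i, f i ^ 2 :=
  Finset.sum_nonneg fun _ _ => sq_nonneg _

private lemma cs_sqrt {ι : Type*} [Fintype ι] (f g : ι → ℝ) :
    ∑ i, f i * g i ≤ Real.sqrt (∑ i, f i ^ 2) * Real.sqrt (∑ i, g i ^ 2) := by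
  have h := Finset.sum_mul_sq_le_sq_mul_sq Finset.univ f g
  calc ∑ i, f i * g i ≤ |∑ i, f i * g i| := le_abs_self _
    _ = Real.sqrt ((∑ i, f i * g i) ^ 2) := (Real.sqrt_sq_eq_abs _).symm
    _ ≤ Real.sqrt ((∑ i, f i ^ 2) * (∑ i, g i ^ 2)) := Real.sqrt_le_sqrt h
    _ = _ := Real.sqrt_mul (sum_sq_nonneg f) _

private lemma cs_eq_cond {ι : Type*} [Fintype ι] (f g : ι → ℝ)
    (h : (∑ i, f i * g i) ^ 2 = (∑ i, f i ^ 2) * (∑ i, g i ^ 2)) (i : ι) :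
    (∑ i, g i ^ 2) * f i = (∑ i, f i * g i) * g i := by
  set A := ∑ i, f i ^ 2 with hA
  set B := ∑ i, g i ^ 2 with hB
  set P := ∑ i, f i * g i with hP
  have key : ∑ i, (B * f i - P * g i) ^ 2 = 0 := by
    have e : ∀ i, (B * f i - P * g i) ^ 2
        = B ^ 2 * f i ^ 2 - 2 * B * P * (f i * g i) + P ^ 2 * g i ^ 2 := fun i => by ring
    rw [Finset.sum_congr rfl fun i _ => e i]
    rw [Finset.sum_add_distrib, Finset.sum_sub_distrib, ← Finset.mul_sum, ← Finset.mul_sum,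
      ← Finset.mul_sum, ← hA, ← hB, ← hP]
    linear_combination (-B) * h
  have h0 := (Finset.sum_eq_zero_iff_of_nonneg (fun i _ => sq_nonneg (B * f i - P * g i))).1 key
    i (Finset.mem_univ i)
  have h1 := pow_eq_zero_iff (n := 2) (by norm_num) |>.1 h0
  linarith [h1]

private lemma cs_sqrt_eq_cond {ι : Type*} [Fintype ι] (f g : ι → ℝ)
    (h : ∑ i, f i * g i = Real.sqrt (∑ i, f i ^ 2) * Real.sqrt (∑ i, g i ^ 2)) (i : ι) :
    (∑ i, g i ^ 2) * f i = (∑ i, f i * g i) * g i := by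
  apply cs_eq_cond
  rw [h, mul_pow, Real.sq_sqrt (sum_sq_nonneg f), Real.sq_sqrt (sum_sq_nonneg g)]

private lemma sq_sum_eq_const {n : ℕ} (x : Fin n → ℝ)
    (h : (∑ i, x i) ^ 2 = (n : ℝ) * ∑ i, x i ^ 2) (i i' : Fin n) : x i = x i' := by
  have h2 : (∑ i, x i * (1:ℝ)) ^ 2 = (∑ i, x i ^ 2) * (∑ _i : Fin n, (1:ℝ) ^ 2) := by
    simp only [mul_one, one_pow, Finset.sum_const, Finset.card_univ, Fintype.card_fin,
      nsmul_eq_mul, mul_one]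
    linarith [h]
  have h1 := cs_eq_cond x (fun _ => (1:ℝ)) h2
  have hi := h1 i
  have hi' := h1 i'
  simp only [mul_one, one_pow, Finset.sum_const, Finset.card_univ, Fintype.card_fin,
    nsmul_eq_mul, mul_one] at hi hi'
  have hn0 : (n:ℝ) ≠ 0 := Nat.cast_ne_zero.2 (by intro h0; exact absurd i.2 (by omega))
  exact mul_left_cancel₀ hn0 (hi.trans hi'.symm)

private lemma frobSq_nonneg {m n : Type*} [Fintype m] [Fintype n] (A : Matrix m n ℝ) :
    0 ≤ frobSq A :=
  Finset.sum_nonneg fun _ _ => Finset.sum_nonneg fun _ _ => sq_nonneg _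

private lemma frobSq_eq_zero {m n : Type*} [Fintype m] [Fintype n] {A : Matrix m n ℝ}
    (h : frobSq A = 0) (i : m) (j : n) : A i j = 0 := by
  have h1 := (Finset.sum_eq_zero_iff_of_nonneg
    (fun i _ => Finset.sum_nonneg fun j _ => sq_nonneg (A i j))).1 h i (Finset.mem_univ i)
  have h2 := (Finset.sum_eq_zero_iff_of_nonneg (fun j _ => sq_nonneg (A i j))).1 h1 j
    (Finset.mem_univ j)
  exact pow_eq_zero_iff (n := 2) (by norm_num) |>.1 h2

private lemma rowsum_sq {n : ℕ} (x : Fin n → ℝ) :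
    (∑ i, x i) ^ 2 ≤ (n : ℝ) * ∑ i, x i ^ 2 := by
  have h := Finset.sum_mul_sq_le_sq_mul_sq Finset.univ x (fun _ => (1:ℝ))
  simp only [mul_one, one_pow, Finset.sum_const, Finset.card_univ, Fintype.card_fin,
    nsmul_eq_mul, mul_one] at h
  linarith

private lemma sigma_le {d n : ℕ} (x : Fin d → Fin n → ℝ) :
    Real.sqrt (∑ j, (∑ i, x j i) ^ 2)
      ≤ Real.sqrt n * Real.sqrt (∑ i, ∑ j, x j i ^ 2) := by
  rw [← Real.sqrt_mul (Nat.cast_nonneg n)]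
  apply Real.sqrt_le_sqrt
  rw [Finset.sum_comm, Finset.mul_sum]
  exact Finset.sum_le_sum fun j _ => rowsum_sq (fun i => x j i)

private lemma frobH_reorder {K n d : ℕ} (H : Matrix (Fin d) (Fin K × Fin n) ℝ) :
    frobSq H = ∑ k, ∑ i, ∑ j, H j (k, i) ^ 2 := by
  unfold frobSq
  rw [Finset.sum_comm, Fintype.sum_prod_type]

private lemma S_forms {K n d : ℕ} (W : Matrix (Fin K) (Fin d) ℝ)
    (H : Matrix (Fin d) (Fin K × Fin n) ℝ)
    (Y : Matrix (Fin K) (Fin K × Fin n) ℝ) (hY : ∀ k p, Y k p = if p.1 = k then 1 else 0) :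
    ∑ k, ∑ p : Fin K × Fin n, (W * H) k p * Y k p
      = ∑ k, ∑ j, W k j * ∑ i, H j (k, i) := by
  refine Finset.sum_congr rfl fun k _ => ?_
  rw [Fintype.sum_prod_type]
  simp only [hY, mul_ite, mul_one, mul_zero]
  rw [Finset.sum_comm]
  simp only [Finset.sum_ite_eq', Finset.mem_univ, if_true]
  simp only [Matrix.mul_apply, Finset.mul_sum]
  exact Finset.sum_comm

private lemma frobY {K n : ℕ} (Y : Matrix (Fin K) (Fin K × Fin n) ℝ)
    (hY : ∀ k p, Y k p = if p.1 = k then 1 else 0) : frobSq Y = (K : ℝ) * n := by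
  unfold frobSq
  have h1 : ∀ k : Fin K, ∑ p : Fin K × Fin n, Y k p ^ 2 = (n : ℝ) := by
    intro k
    rw [Fintype.sum_prod_type]
    simp [hY, apply_ite (· ^ (2:ℕ)), Finset.sum_ite_eq', Finset.mem_univ]
  rw [Finset.sum_congr rfl fun k _ => h1 k]
  simp [mul_comm]

private lemma frob_sub_expand {K n : ℕ} (A Y : Matrix (Fin K) (Fin K × Fin n) ℝ) :
    frobSq (A - Y) = frobSq A - 2 * (∑ k, ∑ p, A k p * Y k p) + frobSq Y := by
  unfold frobSq
  rw [Finset.mul_sum, ← Finset.sum_sub_distrib, ← Finset.sum_add_distrib]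
  refine Finset.sum_congr rfl fun k _ => ?_
  rw [Finset.mul_sum, ← Finset.sum_sub_distrib, ← Finset.sum_add_distrib]
  refine Finset.sum_congr rfl fun p _ => ?_
  simp only [Matrix.sub_apply]
  ring

private lemma S_le {K n d : ℕ} (W : Matrix (Fin K) (Fin d) ℝ)
    (H : Matrix (Fin d) (Fin K × Fin n) ℝ) :
    ∑ k, ∑ j, W k j * (∑ i, H j (k, i))
      ≤ Real.sqrt n * (Real.sqrt (frobSq W) * Real.sqrt (frobSq H)) := by
  set ak : Fin K → ℝ := fun k => Real.sqrt (∑ j, W k j ^ 2) with hak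
  set bk : Fin K → ℝ := fun k => Real.sqrt (∑ i, ∑ j, H j (k, i) ^ 2) with hbk
  have hA : ∑ k, ak k ^ 2 = frobSq W := by
    refine Finset.sum_congr rfl fun k _ => Real.sq_sqrt (sum_sq_nonneg _)
  have hB : ∑ k, bk k ^ 2 = frobSq H := by
    rw [frobH_reorder]
    refine Finset.sum_congr rfl fun k _ =>
      Real.sq_sqrt (Finset.sum_nonneg fun _ _ => sum_sq_nonneg _)
  calc ∑ k, ∑ j, W k j * (∑ i, H j (k, i))
      ≤ ∑ k, ak k * Real.sqrt (∑ j, (∑ i, H j (k, i)) ^ 2) :=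
        Finset.sum_le_sum fun k _ => cs_sqrt _ _
    _ ≤ ∑ k, ak k * (Real.sqrt n * bk k) :=
        Finset.sum_le_sum fun k _ =>
          mul_le_mul_of_nonneg_left (sigma_le fun j i => H j (k, i)) (Real.sqrt_nonneg _)
    _ = Real.sqrt n * ∑ k, ak k * bk k := by
        rw [Finset.mul_sum]; exact Finset.sum_congr rfl fun k _ => by ring
    _ ≤ Real.sqrt n * (Real.sqrt (∑ k, ak k ^ 2) * Real.sqrt (∑ k, bk k ^ 2)) :=
        mul_le_mul_of_nonneg_left (cs_sqrt ak bk) (Real.sqrt_nonneg _)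
    _ = _ := by rw [hA, hB]

private lemma sum_update {ι : Type*} [Fintype ι] [DecidableEq ι] (X Y : ι → ℝ) (k : ι) :
    ∑ i, (if i = k then X i else Y i) = (∑ i, Y i) + (X k - Y k) := by
  have h : ∀ i, (if i = k then X i else Y i) = Y i + (if i = k then X i - Y i else 0) :=
    fun i => by by_cases h : i = k <;> simp [h]
  rw [Finset.sum_congr rfl fun i _ => h i, Finset.sum_add_distrib,
    Finset.sum_ite_eq' Finset.univ k]
  simp

private lemma construct_val (K n d : ℕ) (hK : 0 < K) (hn : 0 < n) (hd : K ≤ d)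
    (lW lH : ℝ) (hlW : 0 < lW) (hlH : 0 < lH)
    (c : ℝ) (hc : c = (K : ℝ) * Real.sqrt ((n : ℝ) * lH * lW)) (hc1 : c ≤ 1)
    (Y : Matrix (Fin K) (Fin K × Fin n) ℝ)
    (hY : ∀ k p, Y k p = if p.1 = k then 1 else 0) :
    ∃ (W₀ : Matrix (Fin K) (Fin d) ℝ) (H₀ : Matrix (Fin d) (Fin K × Fin n) ℝ),
      1 / (2 * (K : ℝ) * (n : ℝ)) * frobSq (W₀ * H₀ - Y)
        + lW / 2 * frobSq W₀ + lH / 2 * frobSq H₀ = c - c ^ 2 / 2 := by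
  have hn0 : (0:ℝ) < (n:ℝ) := by exact_mod_cast hn
  have hK0 : (0:ℝ) < (K:ℝ) := by exact_mod_cast hK
  set sn := Real.sqrt n with hsn
  set sH := Real.sqrt lH with hsH
  set sW := Real.sqrt lW with hsW
  have hsn2 : sn ^ 2 = n := Real.sq_sqrt hn0.le
  have hsH2 : sH ^ 2 = lH := Real.sq_sqrt hlH.le
  have hsW2 : sW ^ 2 = lW := Real.sq_sqrt hlW.le
  have hsnp : 0 < sn := Real.sqrt_pos.2 hn0
  have hsHp : 0 < sH := Real.sqrt_pos.2 hlH
  have hsWp : 0 < sW := Real.sqrt_pos.2 hlW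
  have hcs : c = K * (sn * sH * sW) := by
    rw [hc, Real.sqrt_mul (by positivity), Real.sqrt_mul hn0.le]
  set β : ℝ := sn * sH / sW with hβ
  set ρ : ℝ := (1 - c) * (sW / (sn * sH)) with hρ
  have hρ0 : 0 ≤ ρ := mul_nonneg (by linarith) (by positivity)
  set s : ℝ := Real.sqrt ρ with hs
  have hs2 : s ^ 2 = ρ := Real.sq_sqrt hρ0
  set e : Fin K → Fin d := Fin.castLE hd with he
  have einj : Function.Injective e := Fin.castLE_injective hd
  set W₀ : Matrix (Fin K) (Fin d) ℝ := fun k j => if j = e k then β * s else 0 with hW₀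
  set H₀ : Matrix (Fin d) (Fin K × Fin n) ℝ :=
    fun j p => if j = e p.1 then s else 0 with hH₀
  refine ⟨W₀, H₀, ?_⟩
  have hfW : frobSq W₀ = K * (β ^ 2 * ρ) := by
    unfold frobSq
    simp only [hW₀, apply_ite (· ^ (2:ℕ)), Finset.sum_ite_eq', Finset.mem_univ, if_true]
    simp [hs2.symm, mul_pow, Finset.card_univ]
  have hfH : frobSq H₀ = K * n * ρ := by
    rw [frobSq, Finset.sum_comm]
    simp only [hH₀, apply_ite (· ^ (2:ℕ)), Finset.sum_ite_eq', Finset.mem_univ, if_true]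
    rw [Fintype.sum_prod_type]
    simp [hs2, Finset.card_univ]
    ring
  have hmulent : ∀ (k : Fin K) (p : Fin K × Fin n),
      (W₀ * H₀) k p = if p.1 = k then β * ρ else 0 := by
    intro k p
    rw [Matrix.mul_apply]
    simp only [hW₀, hH₀, ite_mul, zero_mul, mul_ite, mul_zero]
    simp only [Finset.sum_ite_eq', Finset.mem_univ, if_true]
    by_cases h : p.1 = k
    · subst h; simp [hs2.symm]; ring
    · have h2 : ¬ (e p.1 = e k) := fun hh => h (einj hh)
      simp [h2, h]
  have hβρ : β * ρ = 1 - c := by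
    rw [hβ, hρ]; field_simp
  have hent : ∀ (k : Fin K) (p : Fin K × Fin n),
      ((W₀ * H₀ - Y) k p) ^ 2 = if p.1 = k then c ^ 2 else 0 := by
    intro k p
    rw [Matrix.sub_apply, hmulent, hY, hβρ]
    by_cases h : p.1 = k <;> simp [h] <;> ring
  have hinner : ∀ k : Fin K,
      ∑ p : Fin K × Fin n, (if p.1 = k then c ^ 2 else (0:ℝ)) = n * c ^ 2 := by
    intro k
    rw [Fintype.sum_prod_type, Finset.sum_comm]
    simp [Finset.sum_ite_eq', Finset.mem_univ, Finset.card_univ, mul_comm]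
  have hfsub : frobSq (W₀ * H₀ - Y) = K * n * c ^ 2 := by
    unfold frobSq
    rw [Finset.sum_congr rfl fun k _ => Finset.sum_congr rfl fun p _ => hent k p]
    rw [Finset.sum_congr rfl fun k _ => hinner k]
    rw [Finset.sum_const, Finset.card_univ, Fintype.card_fin, nsmul_eq_mul]
    ring
  rw [hfW, hfH, hfsub]
  have h1 : lW * β ^ 2 = n * lH := by
    rw [hβ, div_pow, mul_pow, hsn2, hsH2]
    rw [← hsW2]
    field_simp
  have h2 : (n:ℝ) * lH * ρ = (1 - c) * (sn * sH * sW) := by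
    rw [hρ, ← hsn2, ← hsH2]
    field_simp
  have h3 : (K:ℝ) * ((n:ℝ) * lH * ρ) = (1 - c) * c := by
    rw [h2, hcs]; ring
  have t1 : 1 / (2 * (K:ℝ) * n) * ((K:ℝ) * n * c ^ 2) = c ^ 2 / 2 := by
    field_simp
  rw [t1]
  linear_combination ((K:ℝ) * ρ / 2) * h1 + h3
set_option maxHeartbeats 1600000
/-- **Theorem 1** (bias-free UFM with regularized MSE loss).
If `c := K√(nλ_H λ_W) ≤ 1`, any global minimizer `(W*, H*)` of
`f(W,H) = (1/(2Kn))‖WH − Y‖_F² + (λ_W/2)‖W‖_F² + (λ_H/2)‖H‖_F²`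
collapses: each class's feature columns are equal to a common `h*_k`, the `h*_k` form an
orthogonal frame with common squared norm `ρ = (1−c)√(λ_W/(nλ_H))`, and
`w*_k = √(nλ_H/λ_W) h*_k`.  If `c > 1`, `(0,0)` is a global minimizer. -/
theorem ufm_mse_biasFree_collapse
    (K d n : ℕ) (hK : 2 ≤ K) (hd : K ≤ d) (hn : 1 ≤ n)
    (lW lH : ℝ) (hlW : 0 < lW) (hlH : 0 < lH)
    (c : ℝ) (hc : c = (K : ℝ) * Real.sqrt ((n : ℝ) * lH * lW))
    (Y : Matrix (Fin K) (Fin K × Fin n) ℝ)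
    (hY : ∀ k p, Y k p = if p.1 = k then 1 else 0)
    (f : Matrix (Fin K) (Fin d) ℝ → Matrix (Fin d) (Fin K × Fin n) ℝ → ℝ)
    (hf : ∀ W H, f W H =
      1 / (2 * (K : ℝ) * (n : ℝ)) * frobSq (W * H - Y)
        + lW / 2 * frobSq W + lH / 2 * frobSq H) :
    (c ≤ 1 →
      ∀ (Ws : Matrix (Fin K) (Fin d) ℝ) (Hs : Matrix (Fin d) (Fin K × Fin n) ℝ),
        (∀ W H, f Ws Hs ≤ f W H) →
        ∃ h : Fin K → Fin d → ℝ,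
          -- (i) within-class collapse
          (∀ (k : Fin K) (i : Fin n) (j : Fin d), Hs j (k, i) = h k j) ∧
          -- (ii) equal squared norms, all equal ρ
          (∀ k : Fin K, ∑ j, (h k j) ^ 2
              = (1 - c) * Real.sqrt (lW / ((n : ℝ) * lH))) ∧
          -- (iii) Gram matrix is ρ·I_K
          (∀ k k' : Fin K, ∑ j, h k j * h k' j
              = if k = k' then (1 - c) * Real.sqrt (lW / ((n : ℝ) * lH)) else 0) ∧
          -- (iv) weights aligned with features
          (∀ (k : Fin K) (j : Fin d), Ws k j = Real.sqrt ((n : ℝ) * lH / lW) * h k j)) ∧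
    (1 < c → ∀ W H, f 0 0 ≤ f W H) := by
  have hn0 : (0:ℝ) < (n:ℝ) := by exact_mod_cast (by omega : 0 < n)
  have hK0 : (0:ℝ) < (K:ℝ) := by exact_mod_cast (by omega : 0 < K)
  set sn := Real.sqrt n with hsn
  set sH := Real.sqrt lH with hsH
  set sW := Real.sqrt lW with hsW
  have hsn2 : sn ^ 2 = n := Real.sq_sqrt hn0.le
  have hsH2 : sH ^ 2 = lH := Real.sq_sqrt hlH.le
  have hsW2 : sW ^ 2 = lW := Real.sq_sqrt hlW.le
  have hsnp : 0 < sn := Real.sqrt_pos.2 hn0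
  have hsHp : 0 < sH := Real.sqrt_pos.2 hlH
  have hsWp : 0 < sW := Real.sqrt_pos.2 hlW
  have hcs : c = K * (sn * sH * sW) := by
    rw [hc, Real.sqrt_mul (by positivity), Real.sqrt_mul hn0.le]
  have hrtW : Real.sqrt ((n:ℝ) * lH / lW) = sn * sH / sW := by
    rw [show (n:ℝ) * lH / lW = (sn * sH / sW) ^ 2 by
      rw [div_pow, mul_pow, hsn2, hsH2, hsW2]]
    exact Real.sqrt_sq (by positivity)
  have hrtH : Real.sqrt (lW / ((n:ℝ) * lH)) = sW / (sn * sH) := by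
    rw [show lW / ((n:ℝ) * lH) = (sW / (sn * sH)) ^ 2 by
      rw [div_pow, mul_pow, hsn2, hsH2, hsW2]]
    exact Real.sqrt_sq (by positivity)

  -- general facts about an arbitrary pair (W, H)
  have hfexp : ∀ (W : Matrix (Fin K) (Fin d) ℝ) (H : Matrix (Fin d) (Fin K × Fin n) ℝ),
      f W H = 1 / (2 * (K:ℝ) * n) * (frobSq (W * H)
          - 2 * (∑ k, ∑ p, (W * H) k p * Y k p) + (K:ℝ) * n)
        + lW / 2 * frobSq W + lH / 2 * frobSq H := by
    intro W H
    rw [hf, frob_sub_expand, frobY Y hY]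
  have hQflat : ∀ (W : Matrix (Fin K) (Fin d) ℝ) (H : Matrix (Fin d) (Fin K × Fin n) ℝ),
      ∑ q : Fin K × (Fin K × Fin n), ((W * H) q.1 q.2) ^ 2 = frobSq (W * H) := by
    intro W H; rw [Fintype.sum_prod_type]; rfl
  have hSflat : ∀ (W : Matrix (Fin K) (Fin d) ℝ) (H : Matrix (Fin d) (Fin K × Fin n) ℝ),
      ∑ q : Fin K × (Fin K × Fin n), (W * H) q.1 q.2 * Y q.1 q.2
        = ∑ k, ∑ p, (W * H) k p * Y k p := by
    intro W H; rw [Fintype.sum_prod_type]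
  have hYflat : ∑ q : Fin K × (Fin K × Fin n), (Y q.1 q.2) ^ 2 = (K:ℝ) * n := by
    rw [Fintype.sum_prod_type]; exact frobY Y hY
  have hQS : ∀ (W : Matrix (Fin K) (Fin d) ℝ) (H : Matrix (Fin d) (Fin K × Fin n) ℝ),
      (∑ k, ∑ p, (W * H) k p * Y k p) ^ 2 ≤ frobSq (W * H) * ((K:ℝ) * n) := by
    intro W H
    have h := Finset.sum_mul_sq_le_sq_mul_sq Finset.univ
      (fun q : Fin K × (Fin K × Fin n) => (W * H) q.1 q.2)
      (fun q : Fin K × (Fin K × Fin n) => Y q.1 q.2)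
    rw [hQflat, hSflat, hYflat] at h
    exact h
  have hSle : ∀ (W : Matrix (Fin K) (Fin d) ℝ) (H : Matrix (Fin d) (Fin K × Fin n) ℝ),
      ∑ k, ∑ p, (W * H) k p * Y k p
        ≤ sn * (Real.sqrt (frobSq W) * Real.sqrt (frobSq H)) := by
    intro W H
    rw [S_forms W H Y hY]
    exact S_le W H
  clear_value sn sH sW
  constructor
  · -- part 1 : c ≤ 1
    intro hc1 Ws Hs hmin
    obtain ⟨W₀, H₀, hW₀⟩ := construct_val K n d (by omega) (by omega) hd lW lH hlW hlH
      c hc hc1 Y hY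
    have hfs : f Ws Hs ≤ c - c ^ 2 / 2 := by
      have h := hmin W₀ H₀
      rw [hf W₀ H₀, hW₀] at h
      exact h
    -- notation
    have hfexp' := hfexp Ws Hs
    have hQS' := hQS Ws Hs
    have hSle' := hSle Ws Hs
    have hQf := hQflat Ws Hs
    have hSf := hSflat Ws Hs
    have ha2 : (Real.sqrt (frobSq Ws)) ^ 2 = frobSq Ws := Real.sq_sqrt (frobSq_nonneg Ws)
    have hb2 : (Real.sqrt (frobSq Hs)) ^ 2 = frobSq Hs := Real.sq_sqrt (frobSq_nonneg Hs)
    have ha0 : 0 ≤ Real.sqrt (frobSq Ws) := Real.sqrt_nonneg _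
    have hb0 : 0 ≤ Real.sqrt (frobSq Hs) := Real.sqrt_nonneg _
    have hQ0 : 0 ≤ frobSq (Ws * Hs) := frobSq_nonneg _
    set S := ∑ k, ∑ p, (Ws * Hs) k p * Y k p with hSdef
    set Q := frobSq (Ws * Hs) with hQdef
    set A := frobSq Ws with hAdef
    set B := frobSq Hs with hBdef
    set a := Real.sqrt A with ha
    set b := Real.sqrt B with hb
    clear_value S Q A B a b
    -- the master identity
    have hid : f Ws Hs = (c - c ^ 2 / 2)
        + (Q - S ^ 2 / ((K:ℝ) * n)) / (2 * (K:ℝ) * n)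
        + (sW * a - sH * b) ^ 2 / 2
        + (sW * sH) * (a * b - S / sn)
        + (S / ((K:ℝ) * n) - (1 - c)) ^ 2 / 2 := by
      rw [hfexp', ← ha2, ← hb2, ← hsW2, ← hsH2, hcs, ← hsn2]
      field_simp
      ring
    -- all slacks vanish
    have n1 : 0 ≤ (Q - S ^ 2 / ((K:ℝ) * n)) / (2 * (K:ℝ) * n) := by
      apply div_nonneg _ (by positivity)
      rw [sub_nonneg, div_le_iff₀ (by positivity)]
      exact hQS'
    have n2 : 0 ≤ (sW * a - sH * b) ^ 2 / 2 := by positivity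
    have n3 : 0 ≤ (sW * sH) * (a * b - S / sn) := by
      apply mul_nonneg (by positivity)
      rw [sub_nonneg, div_le_iff₀ hsnp]
      linarith [hSle']
    have n4 : 0 ≤ (S / ((K:ℝ) * n) - (1 - c)) ^ 2 / 2 := by positivity
    have z1 : Q = S ^ 2 / ((K:ℝ) * n) := by
      have h0 : (Q - S ^ 2 / ((K:ℝ) * n)) / (2 * (K:ℝ) * n) = 0 := by
        linarith
      have := (div_eq_zero_iff.1 h0).resolve_right (by positivity)
      linarith
    have z2 : sW * a = sH * b := by
      have h0 : (sW * a - sH * b) ^ 2 / 2 = 0 := by linarith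
      have h1 : (sW * a - sH * b) ^ 2 = 0 := by linarith
      have := pow_eq_zero_iff (n := 2) (by norm_num) |>.1 h1
      linarith
    have z3 : a * b = S / sn := by
      have h0 : (sW * sH) * (a * b - S / sn) = 0 := by linarith
      have h1 : a * b - S / sn = 0 := by
        rcases mul_eq_zero.1 h0 with h | h
        · exact absurd h (by positivity)
        · exact h
      linarith
    have z4 : S / ((K:ℝ) * n) = 1 - c := by
      have h0 : (S / ((K:ℝ) * n) - (1 - c)) ^ 2 / 2 = 0 := by linarith
      have h1 : (S / ((K:ℝ) * n) - (1 - c)) ^ 2 = 0 := by linarith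
      have := pow_eq_zero_iff (n := 2) (by norm_num) |>.1 h1
      linarith
    have hSval : S = (1 - c) * ((K:ℝ) * n) := by
      rw [← z4]; field_simp
    -- entrywise structure of Ws * Hs
    have hWHent : ∀ (k : Fin K) (p : Fin K × Fin n),
        (Ws * Hs) k p = (1 - c) * Y k p := by
      have hcs2 : (∑ q : Fin K × (Fin K × Fin n), (Ws * Hs) q.1 q.2 * Y q.1 q.2) ^ 2
          = (∑ q : Fin K × (Fin K × Fin n), ((Ws * Hs) q.1 q.2) ^ 2)
            * (∑ q : Fin K × (Fin K × Fin n), (Y q.1 q.2) ^ 2) := by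
        rw [hQf, hSf, hYflat, z1]
        field_simp
      intro k p
      have h := cs_eq_cond (fun q : Fin K × (Fin K × Fin n) => (Ws * Hs) q.1 q.2)
        (fun q : Fin K × (Fin K × Fin n) => Y q.1 q.2) hcs2 (k, p)
      simp only at h
      rw [hYflat, hSf, hSval] at h
      have hKn0 : ((K:ℝ) * n) ≠ 0 := by positivity
      exact mul_left_cancel₀ hKn0 (h.trans (by ring))
    have hWH' : ∀ (k k' : Fin K) (i : Fin n),
        ∑ j, Ws k j * Hs j (k', i) = if k' = k then 1 - c else 0 := by
      intro k k' i
      have h := hWHent k (k', i)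
      rw [Matrix.mul_apply] at h
      rw [h, hY]
      by_cases hkk : k' = k <;> simp [hkk]
    by_cases hu : c = 1
    · -- degenerate case : W = 0, H = 0
      have hS0 : S = 0 := by rw [hSval, hu]; ring
      have hab : a * b = 0 := by rw [z3, hS0, zero_div]
      have hazbz : a = 0 ∧ b = 0 := by
        rcases mul_eq_zero.1 hab with h | h
        · refine ⟨h, ?_⟩
          have : sH * b = 0 := by rw [← z2, h, mul_zero]
          rcases mul_eq_zero.1 this with h' | h'
          · exact absurd h' hsHp.ne'
          · exact h'
        · refine ⟨?_, h⟩
          have : sW * a = 0 := by rw [z2, h, mul_zero]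
          rcases mul_eq_zero.1 this with h' | h'
          · exact absurd h' hsWp.ne'
          · exact h'
      have hAz : frobSq Ws = 0 := by rw [← hAdef, ← ha2, hazbz.1]; ring
      have hBz : frobSq Hs = 0 := by rw [← hBdef, ← hb2, hazbz.2]; ring
      have hWz : ∀ k j, Ws k j = 0 := fun k j => frobSq_eq_zero hAz k j
      have hHz : ∀ j p, Hs j p = 0 := fun j p => frobSq_eq_zero hBz j p
      refine ⟨fun _ _ => 0, fun k i j => hHz j (k, i), ?_, ?_, ?_⟩
      · intro k; simp [hu]
      · intro k k'; by_cases hkk : k = k' <;> simp [hkk, hu]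
      · intro k j; simp [hWz k j]
    · -- main case : c < 1
      have hupos : 0 < 1 - c := by
        rcases lt_or_eq_of_le hc1 with h | h
        · linarith
        · exact absurd h hu
      have i0 : Fin n := ⟨0, by omega⟩
      -- chain quantities
      set sk : Fin K → Fin d → ℝ := fun k j => ∑ i, Hs j (k, i) with hsk
      set ak : Fin K → ℝ := fun k => Real.sqrt (∑ j, Ws k j ^ 2) with hak
      set bk : Fin K → ℝ := fun k => Real.sqrt (∑ i, ∑ j, Hs j (k, i) ^ 2) with hbk
      set σk : Fin K → ℝ := fun k => Real.sqrt (∑ j, sk k j ^ 2) with hσk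
      have hak2 : ∀ k, ak k ^ 2 = ∑ j, Ws k j ^ 2 := fun k => Real.sq_sqrt (sum_sq_nonneg _)
      have hbk2 : ∀ k, bk k ^ 2 = ∑ i, ∑ j, Hs j (k, i) ^ 2 :=
        fun k => Real.sq_sqrt (Finset.sum_nonneg fun _ _ => sum_sq_nonneg _)
      have hsumak : ∑ k, ak k ^ 2 = A := by
        rw [hAdef]
        exact Finset.sum_congr rfl fun k _ => hak2 k
      have hsumbk : ∑ k, bk k ^ 2 = B := by
        rw [hBdef, frobH_reorder]
        exact Finset.sum_congr rfl fun k _ => hbk2 k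
      have hSclass : S = ∑ k, ∑ j, Ws k j * sk k j := by
        rw [hSdef]
        exact S_forms Ws Hs Y hY
      have c1 : ∀ k, ∑ j, Ws k j * sk k j ≤ ak k * σk k := fun k => cs_sqrt _ _
      have c2 : ∀ k, σk k ≤ sn * bk k := by
        intro k
        rw [hsn]
        exact sigma_le fun j i => Hs j (k, i)
      have c3 : ∑ k, ak k * bk k ≤ a * b := by
        have h := cs_sqrt ak bk
        rw [hsumak, hsumbk, ← ha, ← hb] at h
        exact h
      have hakn : ∀ k, 0 ≤ ak k := fun k => Real.sqrt_nonneg _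
      have e1 : S ≤ ∑ k, ak k * σk k := by
        rw [hSclass]; exact Finset.sum_le_sum fun k _ => c1 k
      have e2 : ∑ k, ak k * σk k ≤ ∑ k, ak k * (sn * bk k) :=
        Finset.sum_le_sum fun k _ => mul_le_mul_of_nonneg_left (c2 k) (hakn k)
      have e2' : ∑ k, ak k * (sn * bk k) = sn * ∑ k, ak k * bk k := by
        rw [Finset.mul_sum]; exact Finset.sum_congr rfl fun k _ => by ring
      have e3 : sn * ∑ k, ak k * bk k ≤ S := by
        have h := mul_le_mul_of_nonneg_left c3 hsnp.le
        have hsnab : sn * (a * b) = S := by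
          rw [z3, mul_div_cancel₀ _ hsnp.ne']
        linarith
      have hT1 : ∑ k, ak k * σk k = S := by linarith [e1, e2, e2'.le, e2'.ge, e3]
      have hT2 : ∑ k, ak k * (sn * bk k) = S := by linarith [e1, e2, e2'.le, e2'.ge, e3]
      have q1 : ∀ k, ∑ j, Ws k j * sk k j = ak k * σk k := by
        intro k
        have hzero : ∑ k, (ak k * σk k - ∑ j, Ws k j * sk k j) = 0 := by
          rw [Finset.sum_sub_distrib]
          rw [hT1, ← hSclass]
          ring
        have h := (Finset.sum_eq_zero_iff_of_nonneg
          (fun k _ => sub_nonneg.2 (c1 k))).1 hzero k (Finset.mem_univ k)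
        linarith
      have q2 : ∀ k, ak k * σk k = ak k * (sn * bk k) := by
        intro k
        have hzero : ∑ k, (ak k * (sn * bk k) - ak k * σk k) = 0 := by
          rw [Finset.sum_sub_distrib, hT1, hT2]
          ring
        have h := (Finset.sum_eq_zero_iff_of_nonneg
          (fun k _ => sub_nonneg.2 (mul_le_mul_of_nonneg_left (c2 k) (hakn k)))).1 hzero
          k (Finset.mem_univ k)
        linarith
      -- positivity of each row norm
      have hWHdiag : ∀ k, ∑ j, Ws k j * Hs j (k, i0) = 1 - c := by
        intro k
        rw [hWH' k k i0]
        simp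
      have hakpos : ∀ k, 0 < ∑ j, Ws k j ^ 2 := by
        intro k
        rcases (sum_sq_nonneg (fun j => Ws k j)).lt_or_eq with h | h
        · exact h
        · exfalso
          have hz : ∀ j, Ws k j = 0 := by
            intro j
            have := (Finset.sum_eq_zero_iff_of_nonneg
              (fun j _ => sq_nonneg (Ws k j))).1 h.symm j (Finset.mem_univ j)
            exact pow_eq_zero_iff (n := 2) (by norm_num) |>.1 this
          have h0 := hWHdiag k
          rw [Finset.sum_congr rfl fun j _ => by rw [hz j, zero_mul]] at h0
          simp at h0
          linarith
      have hakpos' : ∀ k, 0 < ak k := fun k => Real.sqrt_pos.2 (hakpos k)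
      have hσeq : ∀ k, σk k = sn * bk k := fun k =>
        mul_left_cancel₀ (hakpos' k).ne' (q2 k)
      have hsigsq : ∀ k, ∑ j, sk k j ^ 2 = (n:ℝ) * ∑ i, ∑ j, Hs j (k, i) ^ 2 := by
        intro k
        have h := congrArg (· ^ 2) (hσeq k)
        replace h : (Real.sqrt (∑ j, sk k j ^ 2)) ^ 2 = (sn * bk k) ^ 2 := h
        rw [Real.sq_sqrt (sum_sq_nonneg _), mul_pow, hsn2] at h
        rw [h, hbk2 k]
      -- within-class collapse
      have hcol : ∀ (k : Fin K) (i : Fin n) (j : Fin d), Hs j (k, i) = Hs j (k, i0) := by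
        intro k i j
        have hsum0 : ∑ j', ((n:ℝ) * (∑ i, Hs j' (k, i) ^ 2) - sk k j' ^ 2) = 0 := by
          rw [Finset.sum_sub_distrib, ← Finset.mul_sum]
          rw [Finset.sum_comm]
          rw [← hsigsq k]
          ring
        have hper := (Finset.sum_eq_zero_iff_of_nonneg
          (fun j' _ => sub_nonneg.2 (rowsum_sq (fun i => Hs j' (k, i))))).1 hsum0 j
          (Finset.mem_univ j)
        have heq : (∑ i, Hs j (k, i)) ^ 2 = (n:ℝ) * ∑ i, Hs j (k, i) ^ 2 := by
          have : sk k j = ∑ i, Hs j (k, i) := rfl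
          rw [← this]
          linarith
        exact sq_sum_eq_const (fun i => Hs j (k, i)) heq i i0
      have hskh : ∀ k j, sk k j = (n:ℝ) * Hs j (k, i0) := by
        intro k j
        show (∑ i, Hs j (k, i)) = (n:ℝ) * Hs j (k, i0)
        rw [Finset.sum_congr rfl fun i _ => hcol k i j]
        rw [Finset.sum_const, Finset.card_univ, Fintype.card_fin, nsmul_eq_mul]
      -- alignment of rows of Ws with features
      have hP : ∀ k, ∑ j, Ws k j * sk k j = (n:ℝ) * (1 - c) := by
        intro k
        rw [Finset.sum_congr rfl fun j _ => by rw [hskh k j]]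
        rw [show ∑ j, Ws k j * ((n:ℝ) * Hs j (k, i0))
            = (n:ℝ) * ∑ j, Ws k j * Hs j (k, i0) by
          rw [Finset.mul_sum]; exact Finset.sum_congr rfl fun j _ => by ring]
        rw [hWHdiag k]
      have hsksq : ∀ k, ∑ j, sk k j ^ 2 = (n:ℝ) ^ 2 * ∑ j, Hs j (k, i0) ^ 2 := by
        intro k
        rw [Finset.sum_congr rfl fun j _ => by rw [hskh k j, mul_pow]]
        rw [← Finset.mul_sum]
      have halign : ∀ k j, (∑ j', Hs j' (k, i0) ^ 2) * Ws k j = (1 - c) * Hs j (k, i0) := by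
        intro k j
        have h := cs_sqrt_eq_cond (fun j => Ws k j) (fun j => sk k j) (q1 k) j
        rw [hP k, hsksq k] at h
        have hn2 : ((n:ℝ) ^ 2) ≠ 0 := by positivity
        apply mul_left_cancel₀ hn2
        calc (n:ℝ) ^ 2 * ((∑ j', Hs j' (k, i0) ^ 2) * Ws k j)
            = (n:ℝ) ^ 2 * (∑ j', Hs j' (k, i0) ^ 2) * Ws k j := by ring
          _ = (n:ℝ) * (1 - c) * sk k j := h
          _ = (n:ℝ) * (1 - c) * ((n:ℝ) * Hs j (k, i0)) := by rw [hskh k j]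
          _ = (n:ℝ) ^ 2 * ((1 - c) * Hs j (k, i0)) := by ring
      -- per-class balance of regularizers via rescaling perturbation
      have hBkpos : ∀ k, 0 < ∑ i, ∑ j, Hs j (k, i) ^ 2 := by
        intro k
        have hNkpos : 0 < ∑ j, Hs j (k, i0) ^ 2 := by
          rcases (sum_sq_nonneg (fun j => Hs j (k, i0))).lt_or_eq with h | h
          · exact h
          · exfalso
            have hz : ∀ j, Hs j (k, i0) = 0 := by
              intro j
              have := (Finset.sum_eq_zero_iff_of_nonneg
                (fun j _ => sq_nonneg (Hs j (k, i0)))).1 h.symm j (Finset.mem_univ j)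
              exact pow_eq_zero_iff (n := 2) (by norm_num) |>.1 this
            have h0 := hWHdiag k
            rw [Finset.sum_congr rfl fun j _ => by rw [hz j, mul_zero]] at h0
            simp at h0
            linarith only [h0, hupos]
        calc (0:ℝ) < ∑ j, Hs j (k, i0) ^ 2 := hNkpos
          _ ≤ ∑ i, ∑ j, Hs j (k, i) ^ 2 := by
            have : ∀ i : Fin n, ∑ j, Hs j (k, i) ^ 2 = ∑ j, Hs j (k, i0) ^ 2 :=
              fun i => Finset.sum_congr rfl fun j _ => by rw [hcol k i j]
            rw [Finset.sum_congr rfl fun i _ => this i, Finset.sum_const, Finset.card_univ,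
              Fintype.card_fin, nsmul_eq_mul]
            have hn1 : (1:ℝ) ≤ n := by exact_mod_cast hn
            have hmn := mul_nonneg (sub_nonneg.2 hn1) hNkpos.le
            have he : ((n:ℝ) - 1) * (∑ j, Hs j (k, i0) ^ 2)
                = (n:ℝ) * (∑ j, Hs j (k, i0) ^ 2) - (∑ j, Hs j (k, i0) ^ 2) := by ring
            linarith only [hmn, he]
      have hperturb : ∀ k, lW * (∑ j, Ws k j ^ 2) = lH * (∑ i, ∑ j, Hs j (k, i) ^ 2) := by
        intro k
        have hAkpos := hakpos k
        have hBkpos' := hBkpos k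
        set Ak := ∑ j, Ws k j ^ 2 with hAk
        set Bk := ∑ i, ∑ j, Hs j (k, i) ^ 2 with hBk
        set aK := Real.sqrt Ak with haK
        set bK := Real.sqrt Bk with hbK
        have haK2 : aK ^ 2 = Ak := Real.sq_sqrt hAkpos.le
        have hbK2 : bK ^ 2 = Bk := Real.sq_sqrt hBkpos'.le
        have haKp : 0 < aK := Real.sqrt_pos.2 hAkpos
        have hbKp : 0 < bK := Real.sqrt_pos.2 hBkpos'
        set r2 := sH * bK / (sW * aK) with hr2
        have hr2pos : 0 < r2 := by positivity
        set r := Real.sqrt r2 with hr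
        have hrpos : 0 < r := Real.sqrt_pos.2 hr2pos
        have hrsq : r ^ 2 = r2 := Real.sq_sqrt hr2pos.le
        set W' : Matrix (Fin K) (Fin d) ℝ :=
          fun k' j => if k' = k then r * Ws k' j else Ws k' j with hW'
        set H' : Matrix (Fin d) (Fin K × Fin n) ℝ :=
          fun j p => if p.1 = k then r⁻¹ * Hs j p else Hs j p with hH'
        have hWHeq : W' * H' = Ws * Hs := by
          ext k'' p
          rw [Matrix.mul_apply, Matrix.mul_apply]
          by_cases h1 : k'' = k <;> by_cases h2 : p.1 = k
          · refine Finset.sum_congr rfl fun j _ => ?_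
            simp only [hW', hH', h1, h2, if_true]
            field_simp
          · have hz : ∑ j, Ws k'' j * Hs j p = 0 := by
              have h := hWHent k'' p
              rw [Matrix.mul_apply] at h
              rw [h, hY]
              have : ¬ (p.1 = k'') := by rw [h1]; exact h2
              simp [this]
            have hl : ∑ j, W' k'' j * H' j p = r * ∑ j, Ws k'' j * Hs j p := by
              rw [Finset.mul_sum]
              refine Finset.sum_congr rfl fun j _ => ?_
              simp only [hW', hH', h1, h2, if_true, if_false]
              ring
            rw [hl, hz, mul_zero]
          · have hz : ∑ j, Ws k'' j * Hs j p = 0 := by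
              have h := hWHent k'' p
              rw [Matrix.mul_apply] at h
              rw [h, hY]
              have : ¬ (p.1 = k'') := by rw [h2]; exact fun hh => h1 hh.symm
              simp [this]
            have hl : ∑ j, W' k'' j * H' j p = r⁻¹ * ∑ j, Ws k'' j * Hs j p := by
              rw [Finset.mul_sum]
              refine Finset.sum_congr rfl fun j _ => ?_
              simp only [hW', hH', h1, h2, if_true, if_false]
              ring
            rw [hl, hz, mul_zero]
          · refine Finset.sum_congr rfl fun j _ => by simp only [hW', hH', h1, h2, if_false]
        have hfW' : frobSq W' = A + (r2 * Ak - Ak) := by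
          have hrow : ∀ k', ∑ j, (W' k' j) ^ 2
              = if k' = k then r2 * (∑ j, Ws k' j ^ 2) else ∑ j, Ws k' j ^ 2 := by
            intro k'
            by_cases h1 : k' = k
            · simp only [hW', h1, if_true]
              rw [Finset.mul_sum]
              exact Finset.sum_congr rfl fun j _ => by rw [mul_pow, hrsq]
            · simp only [hW', h1, if_false]
          have hfr : frobSq W'
              = ∑ k', (if k' = k then r2 * (∑ j, Ws k' j ^ 2) else ∑ j, Ws k' j ^ 2) :=
            Finset.sum_congr rfl fun k' _ => hrow k'
          rw [hfr, sum_update]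
          have : ∑ k', ∑ j, Ws k' j ^ 2 = A := by rw [hAdef]; rfl
          rw [this]
        have hfH' : frobSq H' = B + (r2⁻¹ * Bk - Bk) := by
          have hcolsq : ∀ p : Fin K × Fin n, ∑ j, (H' j p) ^ 2
              = if p.1 = k then r2⁻¹ * ∑ j, Hs j p ^ 2 else ∑ j, Hs j p ^ 2 := by
            intro p
            by_cases h2 : p.1 = k
            · simp only [hH', h2, if_true]
              rw [Finset.mul_sum]
              refine Finset.sum_congr rfl fun j _ => ?_
              rw [mul_pow, ← hrsq, inv_pow]
            · simp only [hH', h2, if_false]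
          have hfr : frobSq H' = ∑ p : Fin K × Fin n,
              (if p.1 = k then r2⁻¹ * ∑ j, Hs j p ^ 2 else ∑ j, Hs j p ^ 2) := by
            rw [frobSq, Finset.sum_comm]
            exact Finset.sum_congr rfl fun p _ => hcolsq p
          rw [hfr, Fintype.sum_prod_type]
          have hinner : ∀ k' : Fin K, ∑ i, (if (⟨k', i⟩ : Fin K × Fin n).1 = k
              then r2⁻¹ * ∑ j, Hs j (k', i) ^ 2 else ∑ j, Hs j (k', i) ^ 2)
              = if k' = k then r2⁻¹ * ∑ i, ∑ j, Hs j (k', i) ^ 2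
                else ∑ i, ∑ j, Hs j (k', i) ^ 2 := by
            intro k'
            by_cases h2 : k' = k
            · simp only [h2, if_true, Finset.mul_sum]
            · simp only [h2, if_false]
          rw [Finset.sum_congr rfl fun k' _ => hinner k', sum_update]
          have hBsum : ∑ k', ∑ i, ∑ j, Hs j (k', i) ^ 2 = B := by
            rw [hBdef, frobH_reorder]
          rw [hBsum]
        have hmin' := hmin W' H'
        rw [hf Ws Hs, hf W' H', hWHeq, hfW', hfH'] at hmin'
        rw [← hAdef, ← hBdef] at hmin'
        have exp1 : lW / 2 * (A + (r2 * Ak - Ak)) = lW / 2 * A + lW / 2 * (r2 * Ak - Ak) := by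
          ring
        have exp2 : lH / 2 * (B + (r2⁻¹ * Bk - Bk)) = lH / 2 * B + lH / 2 * (r2⁻¹ * Bk - Bk) := by
          ring
        have hineq : 0 ≤ lW / 2 * (r2 * Ak - Ak) + lH / 2 * (r2⁻¹ * Bk - Bk) := by
          rw [exp1, exp2] at hmin'
          linarith only [hmin']
        have h5 : lW * (r2 * Ak) = sW * aK * (sH * bK) := by
          rw [hr2, ← hsW2, ← haK2]
          field_simp
        have h6 : lH * (r2⁻¹ * Bk) = sW * aK * (sH * bK) := by
          rw [hr2, ← hsH2, ← hbK2]
          field_simp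
        have h9 : lW * Ak = (sW * aK) ^ 2 := by rw [← hsW2, ← haK2]; ring
        have h10 : lH * Bk = (sH * bK) ^ 2 := by rw [← hsH2, ← hbK2]; ring
        have hEq : (sW * aK - sH * bK) ^ 2
            = -2 * (lW / 2 * (r2 * Ak - Ak) + lH / 2 * (r2⁻¹ * Bk - Bk)) := by
          linear_combination (-1) * h9 + (-1) * h10 + h5 + h6
        have h7 : (sW * aK - sH * bK) ^ 2 ≤ 0 := by
          rw [hEq]; linarith only [hineq]
        have h8 : sW * aK = sH * bK := by
          have h0 : (sW * aK - sH * bK) ^ 2 = 0 := le_antisymm h7 (sq_nonneg _)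
          have := pow_eq_zero_iff (n := 2) (by norm_num) |>.1 h0
          linarith only [this]
        rw [h9, h10, h8]
      have hNkpos : ∀ k, 0 < ∑ j, Hs j (k, i0) ^ 2 := by
        intro k
        rcases (sum_sq_nonneg (fun j => Hs j (k, i0))).lt_or_eq with h | h
        · exact h
        · exfalso
          have hz : ∀ j, Hs j (k, i0) = 0 := by
            intro j
            have := (Finset.sum_eq_zero_iff_of_nonneg
              (fun j _ => sq_nonneg (Hs j (k, i0)))).1 h.symm j (Finset.mem_univ j)
            exact pow_eq_zero_iff (n := 2) (by norm_num) |>.1 this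
          have h0 := hWHdiag k
          rw [Finset.sum_congr rfl fun j _ => by rw [hz j, mul_zero]] at h0
          simp at h0
          linarith only [h0, hupos]
      have hBksum : ∀ k, ∑ i, ∑ j, Hs j (k, i) ^ 2 = (n:ℝ) * ∑ j, Hs j (k, i0) ^ 2 := by
        intro k
        have hin : ∀ i : Fin n, ∑ j, Hs j (k, i) ^ 2 = ∑ j, Hs j (k, i0) ^ 2 :=
          fun i => Finset.sum_congr rfl fun j _ => by rw [hcol k i j]
        rw [Finset.sum_congr rfl fun i _ => hin i, Finset.sum_const, Finset.card_univ,
          Fintype.card_fin, nsmul_eq_mul]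
      have hAkN : ∀ k, (∑ j, Ws k j ^ 2) * (∑ j, Hs j (k, i0) ^ 2) = (1 - c) ^ 2 := by
        intro k
        have e2 : (∑ j, Hs j (k, i0) ^ 2) ^ 2 * (∑ j, Ws k j ^ 2)
            = (1 - c) ^ 2 * (∑ j, Hs j (k, i0) ^ 2) := by
          calc (∑ j, Hs j (k, i0) ^ 2) ^ 2 * (∑ j, Ws k j ^ 2)
              = ∑ j, ((∑ j', Hs j' (k, i0) ^ 2) * Ws k j) ^ 2 := by
                rw [Finset.mul_sum]
                exact Finset.sum_congr rfl fun j _ => by ring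
            _ = ∑ j, ((1 - c) * Hs j (k, i0)) ^ 2 :=
                Finset.sum_congr rfl fun j _ => by rw [halign k j]
            _ = (1 - c) ^ 2 * (∑ j, Hs j (k, i0) ^ 2) := by
                rw [Finset.mul_sum]
                exact Finset.sum_congr rfl fun j _ => by ring
        have hNk0 : (∑ j, Hs j (k, i0) ^ 2) ≠ 0 := (hNkpos k).ne'
        apply mul_left_cancel₀ hNk0
        linear_combination e2
      have hNval : ∀ k, ∑ j, Hs j (k, i0) ^ 2 = (1 - c) * (sW / (sn * sH)) := by
        intro k
        have hp := hperturb k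
        rw [hBksum k] at hp
        have key : lH * ((n:ℝ) * (∑ j, Hs j (k, i0) ^ 2) ^ 2) = lW * (1 - c) ^ 2 := by
          linear_combination (-(∑ j, Hs j (k, i0) ^ 2)) * hp + lW * hAkN k
        have hrel : (∑ j, Hs j (k, i0) ^ 2) ^ 2 = ((1 - c) * (sW / (sn * sH))) ^ 2 := by
          rw [mul_pow, div_pow, mul_pow, hsn2, hsH2, hsW2]
          field_simp
          linear_combination key
        have hfac : ((∑ j, Hs j (k, i0) ^ 2) - (1 - c) * (sW / (sn * sH)))
            * ((∑ j, Hs j (k, i0) ^ 2) + (1 - c) * (sW / (sn * sH))) = 0 := by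
          linear_combination hrel
        rcases mul_eq_zero.1 hfac with h | h
        · linarith only [h]
        · exfalso
          have hpos2 : 0 < (1 - c) * (sW / (sn * sH)) := mul_pos hupos (by positivity)
          linarith only [h, hNkpos k, hpos2]
      refine ⟨fun k j => Hs j (k, i0), fun k i j => hcol k i j, ?_, ?_, ?_⟩
      · intro k
        rw [hrtH]
        exact hNval k
      · intro k k'
        by_cases hkk : k = k'
        · subst hkk
          rw [if_pos rfl, hrtH]
          rw [Finset.sum_congr rfl fun j _ => (pow_two (Hs j (k, i0))).symm]
          exact hNval k
        · rw [if_neg hkk]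
          have h0 : ∑ j, Ws k j * Hs j (k', i0) = 0 := by
            rw [hWH' k k' i0, if_neg (fun h => hkk h.symm)]
          have h1 : (1 - c) * ∑ j, Hs j (k, i0) * Hs j (k', i0) = 0 := by
            calc (1 - c) * ∑ j, Hs j (k, i0) * Hs j (k', i0)
                = ∑ j, ((1 - c) * Hs j (k, i0)) * Hs j (k', i0) := by
                  rw [Finset.mul_sum]; exact Finset.sum_congr rfl fun j _ => by ring
              _ = ∑ j, ((∑ j', Hs j' (k, i0) ^ 2) * Ws k j) * Hs j (k', i0) :=
                  Finset.sum_congr rfl fun j _ => by rw [halign k j]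
              _ = (∑ j', Hs j' (k, i0) ^ 2) * ∑ j, Ws k j * Hs j (k', i0) := by
                  rw [Finset.mul_sum]; exact Finset.sum_congr rfl fun j _ => by ring
              _ = 0 := by rw [h0, mul_zero]
          rcases mul_eq_zero.1 h1 with h | h
          · exact absurd h hupos.ne'
          · exact h
      · intro k j
        rw [hrtW]
        have h0 := halign k j
        rw [hNval k] at h0
        have hcoef : ((1 - c) * (sW / (sn * sH))) ≠ 0 := by positivity
        have h2 : ((1 - c) * (sW / (sn * sH))) * Ws k j
            = ((1 - c) * (sW / (sn * sH))) * (sn * sH / sW * Hs j (k, i0)) := by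
          rw [h0]
          field_simp
        exact mul_left_cancel₀ hcoef h2
  · -- part 2 : c > 1
    intro hc1 W H
    have h00 : f 0 0 = 1 / 2 := by
      rw [hf]
      have h1 : frobSq ((0 : Matrix (Fin K) (Fin d) ℝ) * (0 : Matrix (Fin d) (Fin K × Fin n) ℝ)
          - Y) = frobSq Y := by
        unfold frobSq
        refine Finset.sum_congr rfl fun k _ => Finset.sum_congr rfl fun p _ => ?_
        simp [Matrix.sub_apply]
      have h2 : frobSq (0 : Matrix (Fin K) (Fin d) ℝ) = 0 := by simp [frobSq]
      have h3 : frobSq (0 : Matrix (Fin d) (Fin K × Fin n) ℝ) = 0 := by simp [frobSq]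
      rw [h1, h2, h3, frobY Y hY]
      field_simp
      ring
    rw [h00, hfexp W H]
    set S := ∑ k, ∑ p, (W * H) k p * Y k p with hS
    set a := Real.sqrt (frobSq W) with ha
    set b := Real.sqrt (frobSq H) with hb
    have ha2 : a ^ 2 = frobSq W := Real.sq_sqrt (frobSq_nonneg W)
    have hb2 : b ^ 2 = frobSq H := Real.sq_sqrt (frobSq_nonneg H)
    have ha0 : 0 ≤ a := Real.sqrt_nonneg _
    have hb0 : 0 ≤ b := Real.sqrt_nonneg _
    have hQ0 : 0 ≤ frobSq (W * H) := frobSq_nonneg _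
    have hSle' : S ≤ sn * (a * b) := by
      have := hSle W H; rw [← hS, ← ha, ← hb] at this; linarith
    have hreg : sW * sH * (a * b) ≤ lW / 2 * frobSq W + lH / 2 * frobSq H := by
      rw [← ha2, ← hb2, ← hsW2, ← hsH2]
      nlinarith [sq_nonneg (sW * a - sH * b)]
    have hhalf : 1 / (2 * (K:ℝ) * n) * ((K:ℝ) * n) = 1 / 2 := by field_simp
    have hexpand : 1 / (2 * (K:ℝ) * n) * (frobSq (W * H) - 2 * S + (K:ℝ) * n)
        = 1 / (2 * (K:ℝ) * n) * (frobSq (W * H) - 2 * S) + 1 / 2 := by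
      rw [mul_add, hhalf]
    rw [hexpand]
    rcases le_or_gt S 0 with hS0 | hS0
    · have h4 : 0 ≤ 1 / (2 * (K:ℝ) * n) * (frobSq (W * H) - 2 * S) :=
        mul_nonneg (by positivity) (by linarith)
      have h5 : 0 ≤ lW / 2 * frobSq W + lH / 2 * frobSq H := by
        have := frobSq_nonneg W; have := frobSq_nonneg H; positivity
      linarith
    · -- S > 0
      have e3 : sW * sH * (S / sn) = c * S / ((K:ℝ) * n) := by
        rw [hcs, ← hsn2]
        field_simp
      have habS : sW * sH * (S / sn) ≤ sW * sH * (a * b) := by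
        apply mul_le_mul_of_nonneg_left _ (by positivity)
        rw [div_le_iff₀ hsnp]
        linarith [hSle']
      have hc1S : 0 ≤ (c - 1) * S := mul_nonneg (by linarith) hS0.le
      have ee : (c - 1) * S = c * S - S := by ring
      have key : 0 ≤ frobSq (W * H) - 2 * S + 2 * (c * S) := by linarith [hQ0, hc1S, ee]
      have h6 : 1 / (2 * (K:ℝ) * n) * (frobSq (W * H) - 2 * S) + c * S / ((K:ℝ) * n)
          = (frobSq (W * H) - 2 * S + 2 * (c * S)) / (2 * (K:ℝ) * n) := by
        field_simp
      have h7 : 0 ≤ (frobSq (W * H) - 2 * S + 2 * (c * S)) / (2 * (K:ℝ) * n) :=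
        div_nonneg key (by positivity)
      linarith [hreg, habS, e3.symm.le]
end
end

section
/- Let d ≥ K ≥ 2, n ≥ 1, λ_W > 0, λ_H > 0, and set c := K√(nλ_H λ_W) with c ≤ 1. If (W*, H*) is a global minimizer of f(W,H) := (1/(2Kn))‖WH − Y‖_F² + (λ_W/2)‖W‖_F² + (λ_H/2)‖H‖_F² over W ∈ ℝ^{K×d}, H ∈ ℝ^{d×Kn}, then W*W*ᵀ = (1−c)√(nλ_H/λ_W)·I_K and W*H* = (1−c)·(I_K ⊗ 1_nᵀ). -/
open Matrix Finset

noncomputable section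

lemma le_of_sq_le_sq'' (x y : ℝ) (hx : 0 ≤ x) (h : y ^ 2 ≤ x ^ 2) : y ≤ x := by
  calc y ≤ |y| := le_abs_self y
    _ ≤ |x| := by
        have := Real.sqrt_le_sqrt h
        rwa [Real.sqrt_sq_eq_abs, Real.sqrt_sq_eq_abs] at this
    _ = x := abs_of_nonneg hx

lemma lagrange_eq {ι : Type*} [Fintype ι] (f g : ι → ℝ)
    (h : (∑ i, f i * g i) ^ 2 = (∑ i, f i ^ 2) * (∑ i, g i ^ 2)) (i : ι) :
    (∑ j, f j ^ 2) * g i = (∑ j, f j * g j) * f i := by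
  have key : ∑ j, ((∑ j, f j ^ 2) * g j - (∑ j, f j * g j) * f j) ^ 2 = 0 := by
    have e1 : ∀ j : ι, ((∑ j, f j ^ 2) * g j - (∑ j, f j * g j) * f j) ^ 2
        = (∑ j, f j ^ 2) ^ 2 * g j ^ 2 - (2 * (∑ j, f j ^ 2) * (∑ j, f j * g j)) * (f j * g j)
          + (∑ j, f j * g j) ^ 2 * f j ^ 2 := fun j => by ring
    rw [Finset.sum_congr rfl fun j _ => e1 j]
    rw [Finset.sum_add_distrib, Finset.sum_sub_distrib, ← Finset.mul_sum, ← Finset.mul_sum,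
      ← Finset.mul_sum]
    linear_combination (-(∑ j, f j ^ 2)) * h
  have h0 : ((∑ j, f j ^ 2) * g i - (∑ j, f j * g j) * f i) ^ 2 = 0 :=
    (Finset.sum_eq_zero_iff_of_nonneg fun j _ => sq_nonneg _).mp key i (Finset.mem_univ i)
  have := sq_eq_zero_iff.mp h0
  linarith

lemma cs_double {κ ρ : Type*} [Fintype κ] [Fintype ρ] (f g : κ → ρ → ℝ) :
    (∑ k, ∑ r, f k r * g k r) ^ 2 ≤ (∑ k, ∑ r, f k r ^ 2) * (∑ k, ∑ r, g k r ^ 2) := by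
  have := Finset.sum_mul_sq_le_sq_mul_sq Finset.univ
    (fun p : κ × ρ => f p.1 p.2) (fun p : κ × ρ => g p.1 p.2)
  simpa [Fintype.sum_prod_type] using this

lemma lagrange_double {κ ρ : Type*} [Fintype κ] [Fintype ρ] (f g : κ → ρ → ℝ)
    (h : (∑ k, ∑ r, f k r * g k r) ^ 2 = (∑ k, ∑ r, f k r ^ 2) * (∑ k, ∑ r, g k r ^ 2))
    (k : κ) (r : ρ) :
    (∑ k, ∑ r, f k r ^ 2) * g k r = (∑ k, ∑ r, f k r * g k r) * f k r := by
  have := lagrange_eq (fun p : κ × ρ => f p.1 p.2) (fun p : κ × ρ => g p.1 p.2)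
    (by simpa [Fintype.sum_prod_type] using h) (k, r)
  simpa [Fintype.sum_prod_type] using this

set_option maxHeartbeats 2000000

/-- Consequence of Theorem 1 (bias-free UFM with regularized MSE loss):
for `c := K√(nλ_H λ_W) ≤ 1`, any global minimizer `(W*, H*)` satisfies
`W*W*ᵀ = (1−c)√(nλ_H/λ_W)·I_K` and `W*H* = (1−c)·(I_K ⊗ 1_nᵀ)`. -/
theorem ufm_mse_biasFree_WWt_WH
    (K d n : ℕ) (hK : 2 ≤ K) (hd : K ≤ d) (hn : 1 ≤ n)
    (lW lH : ℝ) (hlW : 0 < lW) (hlH : 0 < lH)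
    (c : ℝ) (hc : c = (K : ℝ) * Real.sqrt ((n : ℝ) * lH * lW)) (hc1 : c ≤ 1)
    (Y : Matrix (Fin K) (Fin K × Fin n) ℝ)
    (hY : ∀ k p, Y k p = if p.1 = k then 1 else 0)
    (f : Matrix (Fin K) (Fin d) ℝ → Matrix (Fin d) (Fin K × Fin n) ℝ → ℝ)
    (hf : ∀ W H, f W H =
      1 / (2 * (K : ℝ) * (n : ℝ)) * frobSq (W * H - Y)
        + lW / 2 * frobSq W + lH / 2 * frobSq H)
    (Ws : Matrix (Fin K) (Fin d) ℝ) (Hs : Matrix (Fin d) (Fin K × Fin n) ℝ)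
    (hmin : ∀ W H, f Ws Hs ≤ f W H) :
    Ws * Wsᵀ = ((1 - c) * Real.sqrt ((n : ℝ) * lH / lW)) • (1 : Matrix (Fin K) (Fin K) ℝ) ∧
    Ws * Hs = (1 - c) • Y := by
  have hK0 : 0 < K := by omega
  have hKpos : (0:ℝ) < (K:ℝ) := by exact_mod_cast hK0
  have hnpos : (0:ℝ) < (n:ℝ) := by exact_mod_cast hn
  set N : ℝ := (K:ℝ) * (n:ℝ) with hN
  have hNpos : 0 < N := mul_pos hKpos hnpos
  have hcpos : 0 < c := by
    rw [hc]; exact mul_pos hKpos (Real.sqrt_pos.mpr (by positivity))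
  have hc2 : c ^ 2 = (K:ℝ) ^ 2 * ((n:ℝ) * lH * lW) := by
    rw [hc, mul_pow, Real.sq_sqrt (by positivity)]
  set e : ℝ := 1 - c with he
  have hennn : 0 ≤ e := by simp only [he]; linarith
  set t : ℝ := Real.sqrt ((n:ℝ) * lH / lW) with ht
  have htpos : 0 < t := Real.sqrt_pos.mpr (by positivity)
  have ht2 : t ^ 2 = (n:ℝ) * lH / lW := Real.sq_sqrt (by positivity)
  clear_value N e t
  -- squared Frobenius norm of Y
  have hYsq : frobSq Y = N := by
    have h1 : ∀ k : Fin K, ∑ p : Fin K × Fin n, Y k p ^ 2 = (n:ℝ) := by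
      intro k
      rw [Fintype.sum_prod_type]
      have h2 : ∀ l : Fin K, ∑ j : Fin n, Y k (l, j) ^ 2 = if l = k then (n:ℝ) else 0 := by
        intro l
        by_cases hlk : l = k
        · subst hlk; simp [hY]
        · simp [hY, hlk]
      rw [Finset.sum_congr rfl fun l _ => h2 l]
      simp
    rw [show frobSq Y = ∑ k, ∑ p, Y k p ^ 2 from rfl,
      Finset.sum_congr rfl fun k _ => h1 k, hN]
    simp [mul_comm]
  -- the candidate and upper bound
  have sqeq : ∀ x y : ℝ, 0 ≤ x → 0 ≤ y → x^2 = y^2 → x = y := fun x y hx hy hxy => by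
    calc x = Real.sqrt (x^2) := (Real.sqrt_sq hx).symm
      _ = Real.sqrt (y^2) := by rw [hxy]
      _ = y := Real.sqrt_sq hy
  have hsingle : ∀ (m : Fin K) (g : Fin d → ℝ),
      (∀ r : Fin d, (r:ℕ) ≠ (m:ℕ) → g r = 0) →
      ∑ r, g r = g ⟨(m:ℕ), lt_of_lt_of_le m.isLt hd⟩ := by
    intro m g hg
    apply Finset.sum_eq_single_of_mem _ (Finset.mem_univ _)
    intro r _ hne
    exact hg r fun hc => hne (Fin.eq_of_val_eq hc)
  have hub : f Ws Hs ≤ 1/2 - e^2/2 := by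
    set w : ℝ := Real.sqrt (e * t) with hw
    set h0 : ℝ := Real.sqrt (e / t) with hh0
    have hw2 : w^2 = e * t := Real.sq_sqrt (mul_nonneg hennn htpos.le)
    have hh02 : h0^2 = e / t := Real.sq_sqrt (div_nonneg hennn htpos.le)
    have hwh : w * h0 = e := by
      rw [hw, hh0, ← Real.sqrt_mul (mul_nonneg hennn htpos.le),
        show e * t * (e / t) = e^2 by field_simp]
      exact Real.sqrt_sq hennn
    set W0 : Matrix (Fin K) (Fin d) ℝ := fun k r => if (r:ℕ) = (k:ℕ) then w else 0 with hW0
    set H0 : Matrix (Fin d) (Fin K × Fin n) ℝ :=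
      fun r p => if (r:ℕ) = (p.1:ℕ) then h0 else 0 with hH0
    have hmulW0 : ∀ (k l : Fin K) (j : Fin n), (W0 * H0) k (l, j) = e * Y k (l, j) := by
      intro k l j
      rw [Matrix.mul_apply, hsingle k _ (fun r hr => by
        simp only [hW0, hH0]
        rw [if_neg hr, zero_mul])]
      simp only [hW0, hH0, hY]
      by_cases hlk : l = k
      · subst hlk
        simp [hwh]
      · have hvk : ¬((k:ℕ) = (l:ℕ)) := fun hc => hlk (Fin.eq_of_val_eq hc).symm
        simp [hlk, hvk]
    have hfW0 : frobSq W0 = (K:ℝ) * w^2 := by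
      rw [show frobSq W0 = ∑ k, ∑ r, (W0 k r)^2 from rfl]
      have h1 : ∀ k : Fin K, ∑ r : Fin d, (W0 k r)^2 = w^2 := by
        intro k
        rw [hsingle k _ (fun r hr => by simp only [hW0]; rw [if_neg hr]; ring)]
        simp [hW0]
      rw [Finset.sum_congr rfl fun k _ => h1 k]
      simp [mul_comm]
    have hfH0 : frobSq H0 = (K:ℝ) * (n:ℝ) * h0^2 := by
      rw [show frobSq H0 = ∑ r, ∑ p : Fin K × Fin n, (H0 r p)^2 from rfl, Finset.sum_comm]
      have h1 : ∀ p : Fin K × Fin n, ∑ r : Fin d, (H0 r p)^2 = h0^2 := by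
        intro p
        rw [hsingle p.1 _ (fun r hr => by simp only [hH0]; rw [if_neg hr]; ring)]
        simp [hH0]
      rw [Finset.sum_congr rfl fun p _ => h1 p]
      simp [Finset.card_univ, mul_comm, mul_assoc]
    have hdiff : frobSq (W0 * H0 - Y) = c^2 * N := by
      rw [show frobSq (W0 * H0 - Y) = ∑ k, ∑ p : Fin K × Fin n, ((W0 * H0 - Y) k p)^2 from rfl]
      have h1 : ∀ (k : Fin K) (p : Fin K × Fin n), ((W0 * H0 - Y) k p)^2 = c^2 * (Y k p)^2 := by
        intro k ⟨l, j⟩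
        rw [Matrix.sub_apply, hmulW0 k l j, show e * Y k (l, j) - Y k (l, j)
          = -(c * Y k (l, j)) by rw [he]; ring]
        ring
      rw [Finset.sum_congr rfl fun k _ => Finset.sum_congr rfl fun p _ => h1 k p,
        Finset.sum_congr rfl fun k _ => (Finset.mul_sum ..).symm, ← Finset.mul_sum,
        show (∑ k, ∑ p : Fin K × Fin n, Y k p ^ 2) = frobSq Y from rfl, hYsq]
    have hnlH : (0:ℝ) < (n:ℝ) * lH := mul_pos hnpos hlH
    have hlWt : lW * t = Real.sqrt ((n:ℝ) * lH * lW) := by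
      refine sqeq _ _ (mul_nonneg hlW.le htpos.le) (Real.sqrt_nonneg _) ?_
      rw [mul_pow, ht2, Real.sq_sqrt (by positivity)]
      field_simp
    have hlHt : (n:ℝ) * lH / t = Real.sqrt ((n:ℝ) * lH * lW) := by
      refine sqeq _ _ (div_nonneg hnlH.le htpos.le) (Real.sqrt_nonneg _) ?_
      rw [div_pow, ht2, Real.sq_sqrt (by positivity)]
      field_simp
    have hval := hf W0 H0
    rw [hdiff, hfW0, hfH0, hw2, hh02, hN] at hval
    have h2 : lW/2 * ((K:ℝ) * (e * t)) = e * c / 2 := by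
      rw [hc, ← hlWt]; ring
    have h3 : lH/2 * ((K:ℝ) * (n:ℝ) * (e / t)) = e * c / 2 := by
      rw [hc, ← hlHt]; field_simp
    have h4 : 1/(2*(K:ℝ)*(n:ℝ)) * (c^2 * ((K:ℝ)*(n:ℝ))) = c^2/2 := by
      field_simp
    have hfval : f W0 H0 = 1/2 - e^2/2 := by
      rw [hval, h2, h3, h4, he]
      ring
    calc f Ws Hs ≤ f W0 H0 := hmin W0 H0
      _ = 1/2 - e^2/2 := hfval
  -- quantities
  set Z := Ws * Hs with hZ
  set s : ℝ := ∑ k, ∑ p, Z k p * Y k p with hs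
  set a : ℝ := frobSq Ws with ha
  set b : ℝ := frobSq Hs with hb
  set z : ℝ := frobSq Z with hz
  set P : Matrix (Fin d) (Fin K) ℝ := fun r k => ∑ j, Hs r (k, j) with hP
  set fP : ℝ := ∑ k : Fin K, ∑ r : Fin d, (P r k) ^ 2 with hfP
  clear_value Z s a b z P fP
  have hann : 0 ≤ a := by
    rw [ha]; exact Finset.sum_nonneg fun k _ => Finset.sum_nonneg fun r _ => sq_nonneg _
  have hbnn : 0 ≤ b := by
    rw [hb]; exact Finset.sum_nonneg fun k _ => Finset.sum_nonneg fun r _ => sq_nonneg _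
  have hfPnn : 0 ≤ fP := by
    rw [hfP]; exact Finset.sum_nonneg fun k _ => Finset.sum_nonneg fun r _ => sq_nonneg _
  -- s rewritten through P
  have hsP : s = ∑ k, ∑ r, Ws k r * P r k := by
    rw [hs]
    apply Finset.sum_congr rfl; intro k _
    rw [Fintype.sum_prod_type]
    have step1 : ∀ l : Fin K, ∑ j : Fin n, Z k (l, j) * Y k (l, j)
        = if l = k then ∑ j : Fin n, Z k (k, j) else 0 := by
      intro l
      by_cases hlk : l = k
      · subst hlk; simp [hY]
      · simp [hY, hlk]
    rw [Finset.sum_congr rfl fun l _ => step1 l]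
    rw [Finset.sum_ite_eq' Finset.univ k (fun _ => ∑ j : Fin n, Z k (k, j))]
    simp only [Finset.mem_univ, if_true]
    rw [hZ]
    simp only [Matrix.mul_apply]
    rw [Finset.sum_comm]
    apply Finset.sum_congr rfl; intro r _
    rw [hP, ← Finset.mul_sum]
  -- CS inequalities
  have hCS1 : s ^ 2 ≤ a * fP := by
    have h := cs_double (fun k r => Ws k r) (fun (k : Fin K) (r : Fin d) => P r k)
    rw [hsP, ha, hfP]
    simpa [frobSq] using h
  have hCS2 : fP ≤ (n:ℝ) * b := by
    have hb' : b = ∑ r : Fin d, ∑ k : Fin K, ∑ j : Fin n, Hs r (k, j) ^ 2 := by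
      rw [hb]; simp [frobSq, Fintype.sum_prod_type]
    rw [hfP, hb', Finset.mul_sum, Finset.sum_comm]
    apply Finset.sum_le_sum; intro r _
    rw [Finset.mul_sum]
    apply Finset.sum_le_sum; intro k _
    have h := sq_sum_le_card_mul_sum_sq (s := (Finset.univ : Finset (Fin n)))
      (f := fun j => Hs r (k, j))
    simp only [Finset.card_univ, Fintype.card_fin] at h
    simpa [hP] using h
  have hCS3 : s ^ 2 ≤ z * N := by
    have h := cs_double (fun k (p : Fin K × Fin n) => Z k p) (fun k p => Y k p)
    rw [hs, hz, ← hYsq]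
    simpa [frobSq] using h
  -- loss expansion
  have hloss : f Ws Hs = (z - 2*s + N) / (2*N) + lW/2 * a + lH/2 * b := by
    have hZY : frobSq (Z - Y) = z - 2*s + N := by
      rw [hz, hs, ← hYsq]
      simp only [frobSq, Matrix.sub_apply]
      rw [Finset.mul_sum, ← Finset.sum_sub_distrib, ← Finset.sum_add_distrib]
      apply Finset.sum_congr rfl; intro k _
      rw [Finset.mul_sum, ← Finset.sum_sub_distrib, ← Finset.sum_add_distrib]
      apply Finset.sum_congr rfl; intro p _
      ring
    rw [hf Ws Hs, ← hZ, hZY, ← ha, ← hb, hN]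
    have h2 : (2:ℝ) * (K:ℝ) * (n:ℝ) ≠ 0 := by positivity
    field_simp
  -- the three slacks vanish
  have hsnab : s ^ 2 ≤ (n:ℝ) * (a * b) := by
    calc s ^ 2 ≤ a * fP := hCS1
      _ ≤ a * ((n:ℝ) * b) := by
          exact mul_le_mul_of_nonneg_left hCS2 hann
      _ = (n:ℝ) * (a * b) := by ring
  have hsqle : (2*c*s)^2 ≤ (N * (lW * a + lH * b))^2 := by
    calc (2*c*s)^2 = 4 * c^2 * s^2 := by ring
      _ ≤ 4 * c^2 * ((n:ℝ) * (a*b)) := mul_le_mul_of_nonneg_left hsnab (by positivity)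
      _ = N^2 * (4*lW*lH*(a*b)) := by rw [hc2, hN]; ring
      _ ≤ N^2 * ((lW*a + lH*b)^2) := by
          apply mul_le_mul_of_nonneg_left _ (sq_nonneg N)
          nlinarith [sq_nonneg (lW*a - lH*b)]
      _ = (N * (lW * a + lH * b))^2 := by ring
  have hD2nn : 2*c*s ≤ N * (lW * a + lH * b) := by
    exact le_of_sq_le_sq'' _ _ (mul_nonneg hNpos.le
      (add_nonneg (mul_nonneg hlW.le hann) (mul_nonneg hlH.le hbnn))) hsqle
  have hA : z - 2*s + N*(lW*a) + N*(lH*b) + N*e^2 ≤ 0 := by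
    rw [hloss] at hub
    have h3 := mul_le_mul_of_nonneg_left hub (show (0:ℝ) ≤ 2*N by positivity)
    have h2 : (2*N) * ((z - 2*s + N) / (2*N) + lW/2 * a + lH/2 * b)
        = (z - 2*s + N) + N*(lW*a) + N*(lH*b) := by
      field_simp
    have h4 : (2*N) * (1/2 - e^2/2) = N - N*e^2 := by ring
    rw [h2, h4] at h3
    linarith
  have c1 : 0 ≤ z - s^2/N := by
    rw [sub_nonneg, div_le_iff₀ hNpos]
    exact hCS3
  have c2 : 0 ≤ N*(lW*a) + N*(lH*b) - 2*c*s := by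
    have hr : N*(lW*a) + N*(lH*b) = N * (lW*a + lH*b) := by ring
    linarith [hD2nn]
  have c3 : 0 ≤ (s - N*e)^2/N := div_nonneg (sq_nonneg _) hNpos.le
  have hkey : (z - s^2/N) + (N*(lW*a) + N*(lH*b) - 2*c*s) + (s - N*e)^2/N
      = z - 2*s + N*(lW*a) + N*(lH*b) + N*e^2 := by
    rw [he]; field_simp; ring
  have hsNe : s = N * e := by
    have h1 : (s - N*e)^2/N = 0 := by linarith
    have h2 : (s - N*e)^2 = 0 := (div_eq_zero_iff.mp h1).resolve_right hNpos.ne'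
    have := sq_eq_zero_iff.mp h2
    linarith
  have hze : N * z = s^2 := by
    have h1 : z - s^2/N = 0 := by linarith
    field_simp at h1
    linarith
  have hE2 : N*(lW*a) + N*(lH*b) = 2*c*s := by linarith
  -- exact equality in AM-GM and Cauchy-Schwarz
  have hsq2 : N^2 * (lW*a + lH*b)^2 = 4*c^2*s^2 := by
    linear_combination (N*(lW*a + lH*b) + 2*c*s) * hE2
  have h4 : 4*c^2*s^2 ≤ 4*c^2*((n:ℝ)*(a*b)) :=
    mul_le_mul_of_nonneg_left hsnab (by positivity)
  have h6 : 4*c^2*((n:ℝ)*(a*b)) = 4*N^2*(lW*lH)*(a*b) := by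
    rw [hc2, hN]; ring
  have h5 : 4*N^2*(lW*lH)*(a*b) ≤ N^2*(lW*a + lH*b)^2 := by
    have hE : N^2*(lW*a + lH*b)^2 - 4*N^2*(lW*lH)*(a*b) = (N*(lW*a - lH*b))^2 := by ring
    linarith [sq_nonneg (N*(lW*a - lH*b)), hE]
  have heq1 : 4*c^2*s^2 = 4*c^2*((n:ℝ)*(a*b)) := by
    refine le_antisymm h4 ?_
    rw [h6, ← hsq2]
    exact h5
  have hsab : s^2 = (n:ℝ)*(a*b) := by
    have hc4 : (0:ℝ) < 4*c^2 := by positivity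
    exact mul_left_cancel₀ hc4.ne' heq1
  have hab1 : lW*a = lH*b := by
    have heq2 : N^2*(lW*a + lH*b)^2 = 4*N^2*(lW*lH)*(a*b) := by rw [hsq2, heq1, h6]
    have h7 : N^2 * ((lW*a - lH*b)^2) = 0 := by linear_combination heq2
    have h8 : (lW*a - lH*b)^2 = 0 := by
      rcases mul_eq_zero.mp h7 with h | h
      · exact absurd h (by positivity)
      · exact h
    have := sq_eq_zero_iff.mp h8
    linarith
  have hafP : s^2 = a * fP := by
    refine le_antisymm hCS1 ?_
    have h9 : a * fP ≤ a * ((n:ℝ)*b) := mul_le_mul_of_nonneg_left hCS2 hann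
    have h10 : a * ((n:ℝ)*b) = (n:ℝ)*(a*b) := by ring
    linarith
  -- second conclusion : Z = e • Y
  have hZeY : ∀ k p, Z k p = e * Y k p := by
    intro k p
    have hsYZ : ∑ k, ∑ p : Fin K × Fin n, Y k p * Z k p = s := by
      rw [hs]
      exact Finset.sum_congr rfl fun k _ => Finset.sum_congr rfl fun p _ => mul_comm _ _
    have hyp : (∑ k, ∑ p : Fin K × Fin n, Y k p * Z k p) ^ 2
        = (∑ k, ∑ p : Fin K × Fin n, Y k p ^ 2) * (∑ k, ∑ p : Fin K × Fin n, Z k p ^ 2) := by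
      have hzz : (∑ k, ∑ p : Fin K × Fin n, Z k p ^ 2) = z := by rw [hz]; rfl
      rw [hsYZ, show (∑ k, ∑ p : Fin K × Fin n, Y k p ^ 2) = frobSq Y from rfl, hYsq, hzz, ← hze]
    have hlag := lagrange_double (fun k (p : Fin K × Fin n) => Y k p) (fun k p => Z k p) hyp k p
    rw [hsYZ, show (∑ k, ∑ p : Fin K × Fin n, Y k p ^ 2) = frobSq Y from rfl, hYsq, hsNe] at hlag
    have := mul_left_cancel₀ hNpos.ne' (by linear_combination hlag :
      N * Z k p = N * (e * Y k p))
    exact this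
  have goal2 : Z = e • Y := by
    ext k p
    rw [Matrix.smul_apply, hZeY k p, smul_eq_mul]
  refine ⟨?_, goal2⟩
  -- first conclusion
  rcases eq_or_lt_of_le hennn with he0 | hepos
  · -- degenerate case e = 0
    have hs0 : s = 0 := by rw [hsNe, ← he0, mul_zero]
    have ha0 : a = 0 := by
      have h1 : N*(lW*a) + N*(lH*b) = 0 := by rw [hE2, hs0]; ring
      have h2 : 0 ≤ N*(lW*a) := mul_nonneg hNpos.le (mul_nonneg hlW.le hann)
      have h3 : 0 ≤ N*(lH*b) := mul_nonneg hNpos.le (mul_nonneg hlH.le hbnn)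
      have h4 : N*(lW*a) = 0 := by linarith
      have h5 : lW * a = 0 := (mul_eq_zero.mp h4).resolve_left hNpos.ne'
      exact (mul_eq_zero.mp h5).resolve_left hlW.ne'
    have h1 : ∑ k, ∑ r, Ws k r ^ 2 = 0 := by
      rw [show (∑ k, ∑ r, Ws k r ^ 2) = frobSq Ws from rfl, ← ha, ha0]
    have hWs0 : ∀ k r, Ws k r = 0 := by
      intro k r
      have h2 := (Finset.sum_eq_zero_iff_of_nonneg
        (fun k _ => Finset.sum_nonneg fun r _ => sq_nonneg (Ws k r))).mp h1 k (Finset.mem_univ k)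
      have h3 := (Finset.sum_eq_zero_iff_of_nonneg
        (fun r _ => sq_nonneg (Ws k r))).mp h2 r (Finset.mem_univ r)
      exact sq_eq_zero_iff.mp h3
    ext k l
    rw [Matrix.smul_apply, Matrix.one_apply, Matrix.mul_apply]
    simp [hWs0, ← he0]
  · -- main case e > 0
    have hspos : 0 < s := by rw [hsNe]; exact mul_pos hNpos hepos
    have habpos : 0 < a * b := by
      have h1 : 0 < (n:ℝ)*(a*b) := by rw [← hsab]; exact pow_pos hspos 2
      by_contra hcon
      push_neg at hcon
      exact absurd h1 (not_lt.mpr (mul_nonpos_of_nonneg_of_nonpos hnpos.le hcon))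
    have hapos : 0 < a := by
      by_contra hcon
      push_neg at hcon
      exact absurd habpos (not_lt.mpr (mul_nonpos_of_nonpos_of_nonneg hcon hbnn))
    have hlagW : ∀ (k : Fin K) (r : Fin d), a * P r k = s * Ws k r := by
      intro k r
      have hyp : (∑ k, ∑ r, Ws k r * P r k) ^ 2
          = (∑ k, ∑ r, Ws k r ^ 2) * (∑ k : Fin K, ∑ r : Fin d, (P r k) ^ 2) := by
        rw [← hsP, show (∑ k, ∑ r, Ws k r ^ 2) = frobSq Ws from rfl, ← ha, ← hfP, hafP]
      have hlag := lagrange_double (fun k r => Ws k r) (fun (k : Fin K) (r : Fin d) => P r k)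
        hyp k r
      rw [← hsP, show (∑ k, ∑ r, Ws k r ^ 2) = frobSq Ws from rfl, ← ha] at hlag
      exact hlag
    have hmain : ∀ k l, s * (Ws * Wsᵀ) k l = a * (e * ((n:ℝ) * (if l = k then 1 else 0))) := by
      intro k l
      have h1 : s * (Ws * Wsᵀ) k l = ∑ r, Ws k r * (s * Ws l r) := by
        rw [Matrix.mul_apply, Finset.mul_sum]
        exact Finset.sum_congr rfl fun r _ => by rw [Matrix.transpose_apply]; ring
      rw [h1, Finset.sum_congr rfl fun r _ => by rw [← hlagW l r]]
      have h3 : ∑ r, Ws k r * (a * P r l) = a * ∑ r, Ws k r * P r l := by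
        rw [Finset.mul_sum]
        exact Finset.sum_congr rfl fun r _ => by ring
      rw [h3]
      have h4 : ∑ r, Ws k r * P r l = ∑ j : Fin n, Z k (l, j) := by
        rw [hZ]
        simp only [Matrix.mul_apply]
        rw [Finset.sum_comm]
        exact Finset.sum_congr rfl fun r _ => by rw [hP, ← Finset.mul_sum]
      have h5 : ∑ j : Fin n, Z k (l, j) = e * ((n:ℝ) * (if l = k then 1 else 0)) := by
        rw [Finset.sum_congr rfl fun j _ => hZeY k (l, j), ← Finset.mul_sum]
        congr 1
        by_cases hlk : l = k <;> simp [hY, hlk]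
      rw [h4, h5]
    have haKet : a = (K:ℝ) * e * t := by
      have h1 : (n:ℝ) * (lW * a^2) = lH * s^2 := by
        calc (n:ℝ) * (lW * a^2) = (n:ℝ)*a*(lW*a) := by ring
          _ = (n:ℝ)*a*(lH*b) := by rw [hab1]
          _ = lH * ((n:ℝ)*(a*b)) := by ring
          _ = lH * s^2 := by rw [← hsab]
      have h3 : lW * t^2 = (n:ℝ)*lH := by rw [ht2]; field_simp
      have h4 : lH * s^2 = lH * ((K:ℝ)*(n:ℝ)*e)^2 := by rw [hsNe, hN]
      have h5 : (n:ℝ) * (lW * a^2) = (n:ℝ) * (lW * ((K:ℝ)*e*t)^2) := by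
        linear_combination h1 + h4 - ((n:ℝ)*(K:ℝ)^2*e^2)*h3
      have h6 : lW * a^2 = lW * ((K:ℝ)*e*t)^2 := mul_left_cancel₀ hnpos.ne' h5
      have h7 : a^2 = ((K:ℝ)*e*t)^2 := mul_left_cancel₀ hlW.ne' h6
      calc a = Real.sqrt (a^2) := (Real.sqrt_sq hann).symm
        _ = Real.sqrt (((K:ℝ)*e*t)^2) := by rw [h7]
        _ = (K:ℝ)*e*t := Real.sqrt_sq (by positivity)
    ext k l
    have h := hmain k l
    rw [haKet, hsNe, hN] at h
    rw [Matrix.smul_apply, Matrix.one_apply]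
    by_cases hkl : k = l
    · subst hkl
      rw [if_pos rfl] at h ⊢
      rw [smul_eq_mul, mul_one]
      have h9 : ((K:ℝ)*(n:ℝ)*e) * ((Ws * Wsᵀ) k k) = ((K:ℝ)*(n:ℝ)*e) * (e*t) := by
        linear_combination h
      exact mul_left_cancel₀ (by positivity) h9
    · have hlk : ¬ (l = k) := fun hcon => hkl hcon.symm
      rw [if_neg hlk] at h
      rw [if_neg hkl, smul_eq_mul, mul_zero]
      have h9 : ((K:ℝ)*(n:ℝ)*e) * ((Ws * Wsᵀ) k l) = ((K:ℝ)*(n:ℝ)*e) * 0 := by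
        linear_combination h
      exact mul_left_cancel₀ (by positivity) h9
end
end

section
/- Let K ≥ 1, d ≥ 1, ρ ≥ 0, and let H̄ ∈ ℝ^{d×K} satisfy H̄ᵀH̄ = ρ·I_K (an orthogonal frame). Define the global mean h_G := (1/K)·H̄·1_K ∈ ℝ^d. Then (H̄ − h_G·1_Kᵀ)ᵀ(H̄ − h_G·1_Kᵀ) = ρ·(I_K − (1/K)·1_K·1_Kᵀ); that is, the centered orthogonal frame is a simplex equiangular tight frame. -/
open Matrix Finset

noncomputable section

/-- Centering an orthogonal frame by its global mean yields a simplex ETF: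
if `H̄ᵀH̄ = ρ·I_K` and `h_G = (1/K)·H̄·1_K`, then
`(H̄ − h_G 1_Kᵀ)ᵀ(H̄ − h_G 1_Kᵀ) = ρ·(I_K − (1/K)·1_K 1_Kᵀ)`. -/
theorem centered_orthogonal_frame_is_simplex_ETF
    (K d : ℕ) (hK : 1 ≤ K) (hd : 1 ≤ d)
    (ρ : ℝ) (hρ : 0 ≤ ρ)
    (Hbar : Matrix (Fin d) (Fin K) ℝ)
    (hOF : Hbarᵀ * Hbar = ρ • (1 : Matrix (Fin K) (Fin K) ℝ))
    (hG : Fin d → ℝ) (hhG : ∀ j, hG j = (1 / (K : ℝ)) * ∑ k, Hbar j k)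
    (C : Matrix (Fin d) (Fin K) ℝ) (hC : ∀ j k, C j k = Hbar j k - hG j) :
    Cᵀ * C = ρ • ((1 : Matrix (Fin K) (Fin K) ℝ)
        - (1 / (K : ℝ)) • Matrix.of (fun _ _ : Fin K => (1 : ℝ))) := by
  have hK0 : (K : ℝ) ≠ 0 := Nat.cast_ne_zero.mpr (by omega)
  have hIP : ∀ a b : Fin K, ∑ j, Hbar j a * Hbar j b
      = ρ * (if a = b then 1 else 0) := by
    intro a b
    have := congrFun (congrFun hOF a) b
    simpa [Matrix.mul_apply, Matrix.transpose_apply, Matrix.one_apply,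
      Matrix.smul_apply, mul_comm] using this
  have hg : ∀ a : Fin K, ∑ j, Hbar j a * hG j = ρ / K := by
    intro a
    simp only [hhG, Finset.mul_sum]
    rw [Finset.sum_comm]
    have : ∀ k : Fin K, ∑ j, Hbar j a * ((1 / (K:ℝ)) * Hbar j k)
        = (1 / (K:ℝ)) * (ρ * if a = k then 1 else 0) := by
      intro k
      rw [← hIP a k, Finset.mul_sum]
      congr 1; ext j; ring
    rw [Finset.sum_congr rfl fun k _ => this k, ← Finset.mul_sum]
    simp
    field_simp
  have hgg : ∑ j, hG j * hG j = ρ / K := by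
    have : ∀ j, hG j * hG j = (1 / (K:ℝ)) * ∑ k, Hbar j k * hG j := by
      intro j
      rw [← Finset.sum_mul, hhG j]
      ring
    rw [Finset.sum_congr rfl fun j _ => this j, ← Finset.mul_sum, Finset.sum_comm]
    rw [Finset.sum_congr rfl fun k _ => hg k]
    simp [Finset.sum_const]
    field_simp
  ext a b
  simp only [Matrix.mul_apply, Matrix.transpose_apply, Matrix.smul_apply,
    Matrix.sub_apply, Matrix.one_apply, Matrix.of_apply, smul_eq_mul, hC]
  have expand : ∑ j, (Hbar j a - hG j) * (Hbar j b - hG j)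
      = (∑ j, Hbar j a * Hbar j b) - (∑ j, Hbar j a * hG j)
        - (∑ j, Hbar j b * hG j) + ∑ j, hG j * hG j := by
    rw [← Finset.sum_sub_distrib, ← Finset.sum_sub_distrib, ← Finset.sum_add_distrib]
    congr 1; ext j; ring
  rw [expand, hIP, hg, hg, hgg]
  by_cases h : a = b <;> simp [h] <;> field_simp <;> ring
end
end
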